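/- Let g ≥ 0 and n ≥ 1 be integers with 2g + n − 2 > 0, and suppose (ℓ_j)_{j≥1} is a sequence of positive reals such that ∑_{j≥1} Φ(ℓ_j) = (π²/4)(2g + n − 2), where Φ(L) = π²/4 − 𝓛(√(1−e^{−L})) − 𝓛(√(1−e^{−L})/(1+√(1−e^{−L}))). Then for every L > 0, #{j : ℓ_j ≤ L} ≤ π²(2g + n − 2)·e^L/(L+2). -/

import Mathlib

open Real MeasureTheory

/-- The real dilogarithm, defined for `x ≤ 1` via the integral
`Li₂(x) = -∫₀ˣ log(1-t)/t dt`. -/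
noncomputable def Li2 (x : ℝ) : ℝ := -∫ t in (0:ℝ)..x, Real.log (1 - t) / t

/-- The Rogers dilogarithm `𝓛(x) = Li₂(x) + (1/2)·log|x|·log(1-x)`
(note `Real.log` of a negative number is the log of its absolute value,
and `Real.log 0 = 0`, so this formula also covers `x ≤ 0` and the endpoints). -/
noncomputable def rogersL (x : ℝ) : ℝ := Li2 x + (1/2) * Real.log x * Real.log (1 - x)

section OrthoAux
open Set Filter Topology intervalIntegral ENNReal NNReal


lemma hasSum_integrand {t : ℝ} (ht : t ∈ Ioo (0:ℝ) 1) :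
    HasSum (fun n : ℕ => t ^ n / (n + 1)) (-Real.log (1 - t) / t) := by
  have h := hasSum_pow_div_log_of_abs_lt_one (x := t)
    (by rw [abs_lt]; constructor <;> [linarith [ht.1]; exact ht.2])
  have h2 := h.div_const t
  have ht0 : t ≠ 0 := ne_of_gt ht.1
  have : (fun n : ℕ => t ^ (n + 1) / (n + 1) / t) = fun n : ℕ => t ^ n / (n + 1) := by
    funext n; rw [pow_succ]; field_simp
  rwa [this] at h2

lemma F_meas (n : ℕ) : Measurable (fun t : ℝ => t ^ n / (n + 1)) := by measurability

lemma F_nonneg {n : ℕ} {t : ℝ} (ht : t ∈ Ioo (0:ℝ) 1) : 0 ≤ t ^ n / (n + 1 : ℝ) :=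
  div_nonneg (pow_nonneg ht.1.le n) (by positivity)

lemma F_integral (n : ℕ) : ∫ t in Ioo (0:ℝ) 1, t ^ n / (n + 1) = 1 / (n + 1 : ℝ) ^ 2 := by
  rw [← MeasureTheory.integral_Ioc_eq_integral_Ioo, ← intervalIntegral.integral_of_le zero_le_one]
  rw [intervalIntegral.integral_div, integral_pow]
  have h : ((n:ℝ)+1) ≠ 0 := by positivity
  rw [one_pow, zero_pow (Nat.succ_ne_zero n)]
  field_simp
  ring

lemma sum_shift : HasSum (fun n : ℕ => 1 / ((n:ℝ) + 1) ^ 2) (π ^ 2 / 6) := by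
  have h := hasSum_zeta_two
  have h2 := (hasSum_nat_add_iff' (f := fun n : ℕ => (1:ℝ) / (n:ℝ) ^ 2) 1).2 h
  simp only [Finset.range_one, Finset.sum_singleton, Nat.cast_zero] at h2
  norm_num at h2
  convert h2 using 2 with n
  · rfl
  push_cast
  ring

lemma summable_shift : Summable (fun n : ℕ => 1 / ((n:ℝ) + 1) ^ 2) := sum_shift.summable

lemma F_lintegral (n : ℕ) :
    ∫⁻ t in Ioo (0:ℝ) 1, ENNReal.ofReal (t ^ n / (n + 1)) =
      ENNReal.ofReal (1 / ((n:ℝ) + 1) ^ 2) := by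
  rw [← F_integral n]
  rw [← MeasureTheory.ofReal_integral_eq_lintegral_ofReal]
  · exact (continuous_pow n).continuousOn.integrableOn_compact isCompact_Icc
      |>.mono_set Ioo_subset_Icc_self |>.integrable.div_const _
  · exact (ae_restrict_iff' measurableSet_Ioo).2 (ae_of_all _ fun t ht => F_nonneg ht)

lemma lintegral_g :
    ∫⁻ t in Ioo (0:ℝ) 1, ENNReal.ofReal (-Real.log (1 - t) / t) =
      ENNReal.ofReal (π ^ 2 / 6) := by
  have key : ∀ t ∈ Ioo (0:ℝ) 1,
      ENNReal.ofReal (-Real.log (1 - t) / t) = ∑' n : ℕ, ENNReal.ofReal (t ^ n / (n + 1)) := by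
    intro t ht
    rw [← (hasSum_integrand ht).tsum_eq]
    exact (ENNReal.ofReal_tsum_of_nonneg (fun n => F_nonneg ht)
      (hasSum_integrand ht).summable)
  rw [MeasureTheory.setLIntegral_congr_fun measurableSet_Ioo key]
  rw [MeasureTheory.lintegral_tsum (fun n => ((F_meas n).ennreal_ofReal).aemeasurable)]
  simp_rw [F_lintegral]
  rw [← ENNReal.ofReal_tsum_of_nonneg (fun n => by positivity) summable_shift]
  rw [sum_shift.tsum_eq]

lemma f_meas : Measurable (fun t : ℝ => Real.log (1 - t) / t) := by
  exact (Real.measurable_log.comp (measurable_const.sub measurable_id)).div measurable_id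

lemma f_nonpos {t : ℝ} (ht : t ∈ Ioo (0:ℝ) 1) : Real.log (1 - t) / t ≤ 0 :=
  div_nonpos_iff.2 (Or.inr ⟨Real.log_nonpos (by linarith [ht.1, ht.2]) (by linarith [ht.1]),
    ht.1.le⟩)

lemma lintegral_f_norm :
    ∫⁻ t in Ioo (0:ℝ) 1, (‖Real.log (1 - t) / t‖₊ : ℝ≥0∞) = ENNReal.ofReal (π ^ 2 / 6) := by
  rw [← lintegral_g]
  refine MeasureTheory.setLIntegral_congr_fun measurableSet_Ioo (fun t ht => ?_)
  rw [← enorm_eq_nnnorm, Real.enorm_eq_ofReal_abs, abs_of_nonpos (f_nonpos ht), neg_div]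

lemma f_integrableOn : IntegrableOn (fun t : ℝ => Real.log (1 - t) / t) (Icc (0:ℝ) 1) volume := by
  rw [integrableOn_Icc_iff_integrableOn_Ioo]
  refine ⟨f_meas.aestronglyMeasurable.restrict, ?_⟩
  rw [hasFiniteIntegral_def]; simp_rw [enorm_eq_nnnorm]; rw [lintegral_f_norm]
  exact ENNReal.ofReal_lt_top

lemma Li2_one : Li2 1 = π ^ 2 / 6 := by
  unfold Li2
  rw [intervalIntegral.integral_of_le zero_le_one, MeasureTheory.integral_Ioc_eq_integral_Ioo]
  have h1 : ∫ t in Ioo (0:ℝ) 1, -(Real.log (1 - t) / t) = π ^ 2 / 6 := by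
    rw [MeasureTheory.integral_eq_lintegral_of_nonneg_ae
      ((ae_restrict_iff' measurableSet_Ioo).2 (ae_of_all _ fun t ht => neg_nonneg.2 (f_nonpos ht)))
      (f_meas.neg.aestronglyMeasurable.restrict)]
    have : ∀ t ∈ Ioo (0:ℝ) 1, ENNReal.ofReal (-(Real.log (1 - t) / t)) =
        ENNReal.ofReal (-Real.log (1 - t) / t) := by
      intro t ht; rw [neg_div]
    rw [MeasureTheory.setLIntegral_congr_fun measurableSet_Ioo this, lintegral_g,
      ENNReal.toReal_ofReal (by positivity)]
  rw [MeasureTheory.integral_neg] at h1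
  exact h1

lemma Li2_contOn : ContinuousOn Li2 (Icc (0:ℝ) 1) := by
  have h := intervalIntegral.continuousOn_primitive_interval (a := (0:ℝ)) (b := (1:ℝ))
    (μ := volume) (f := fun t : ℝ => Real.log (1 - t) / t)
    (by rw [uIcc_of_le zero_le_one]; exact f_integrableOn)
  rw [uIcc_of_le zero_le_one] at h
  exact h.neg

lemma Li2_zero : Li2 0 = 0 := by simp [Li2]

lemma Li2_hasDeriv {x : ℝ} (hx : x ∈ Ioo (0:ℝ) 1) :
    HasDerivAt Li2 (-(Real.log (1 - x) / x)) x := by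
  have hint : IntervalIntegrable (fun t : ℝ => Real.log (1 - t) / t) volume 0 x := by
    apply MeasureTheory.IntegrableOn.intervalIntegrable
    rw [uIcc_of_le hx.1.le]
    exact f_integrableOn.mono_set (Icc_subset_Icc le_rfl hx.2.le)
  have hne : (1:ℝ) - x ≠ 0 := sub_ne_zero_of_ne (ne_of_lt hx.2).symm
  have hca : ContinuousAt (fun t : ℝ => Real.log (1 - t) / t) x := by
    exact ((Real.continuousAt_log (by simpa using hne)).comp
      ((continuous_const.sub continuous_id).continuousAt)).div continuousAt_id (ne_of_gt hx.1)
  have h := intervalIntegral.integral_hasDerivAt_right hint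
    (f_meas.stronglyMeasurable.stronglyMeasurableAtFilter) hca
  exact h.neg

lemma rogersL_hasDeriv {x : ℝ} (hx : x ∈ Ioo (0:ℝ) 1) :
    HasDerivAt rogersL
      (-(Real.log (1 - x) / x + Real.log x / (1 - x)) / 2) x := by
  have hx0 : x ≠ 0 := ne_of_gt hx.1
  have hx1 : (1:ℝ) - x ≠ 0 := sub_ne_zero_of_ne (ne_of_lt hx.2).symm
  have h1m : HasDerivAt (fun y : ℝ => 1 - y) (-1) x := by
    simpa using (hasDerivAt_id x).const_sub 1
  have hlog1 : HasDerivAt (fun y : ℝ => Real.log (1 - y)) ((1 - x)⁻¹ * (-1)) x :=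
    (Real.hasDerivAt_log hx1).comp x h1m
  have hlog : HasDerivAt Real.log x⁻¹ x := Real.hasDerivAt_log hx0
  have hprod : HasDerivAt (fun y : ℝ => (1/2 : ℝ) * Real.log y * Real.log (1 - y))
      ((1/2 * x⁻¹) * Real.log (1 - x) + (1/2 * Real.log x) * ((1 - x)⁻¹ * (-1))) x :=
    ((hlog.const_mul (1/2 : ℝ)).mul hlog1)
  have h := (Li2_hasDeriv hx).add hprod
  have heq : -(Real.log (1 - x) / x) +
      ((1/2 * x⁻¹) * Real.log (1 - x) + (1/2 * Real.log x) * ((1 - x)⁻¹ * (-1))) =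
      -(Real.log (1 - x) / x + Real.log x / (1 - x)) / 2 := by
    field_simp
    ring
  rw [heq] at h
  exact h

lemma log_mul_log_zero :
    Tendsto (fun x : ℝ => Real.log x * Real.log (1 - x)) (𝓝[>] (0:ℝ)) (𝓝 0) := by
  have hb : Tendsto (fun x : ℝ => -2 * (Real.log x * x)) (𝓝[>] (0:ℝ)) (𝓝 0) := by
    have := (tendsto_log_mul_rpow_nhdsGT_zero one_pos).const_mul (-2 : ℝ)
    simpa using this
  apply squeeze_zero_norm' _ hb
  filter_upwards [Ioo_mem_nhdsGT_of_mem (show (0:ℝ) ∈ Ico 0 (1/2) by norm_num)] with x hx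
  have hx0 : 0 < x := hx.1
  have hx2 : x < 1/2 := hx.2
  have hlx : Real.log x ≤ 0 := Real.log_nonpos hx0.le (by linarith)
  have hl1x : Real.log (1 - x) ≤ 0 := Real.log_nonpos (by linarith) (by linarith)
  have hlb : -(2*x) ≤ Real.log (1 - x) := by
    have h := Real.one_sub_inv_le_log_of_pos (show 0 < 1 - x by linarith)
    have : -(2*x) ≤ 1 - (1-x)⁻¹ := by
      rw [← sub_nonneg]
      have h1x : (0:ℝ) < 1 - x := by linarith
      have : 1 - (1-x)⁻¹ - (-(2*x)) = x*(1 - 2*x)/(1-x) := by field_simp; ring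
      rw [this]
      exact div_nonneg (mul_nonneg hx0.le (by linarith)) h1x.le
    linarith
  rw [norm_eq_abs, abs_mul, abs_of_nonpos hlx, abs_of_nonpos hl1x]
  nlinarith [mul_le_mul_of_nonneg_left (neg_le_neg hlb) (neg_nonneg.2 hlx)]

lemma log_mul_log_one :
    Tendsto (fun x : ℝ => Real.log x * Real.log (1 - x)) (𝓝[<] (1:ℝ)) (𝓝 0) := by
  have hmap : Tendsto (fun x : ℝ => 1 - x) (𝓝[<] (1:ℝ)) (𝓝[>] (0:ℝ)) := by
    rw [tendsto_nhdsWithin_iff]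
    constructor
    · have : Tendsto (fun x : ℝ => 1 - x) (𝓝 (1:ℝ)) (𝓝 0) := by
        simpa using (tendsto_const_nhds (x := (1:ℝ)) (f := 𝓝 (1:ℝ))).sub (tendsto_id (x := 𝓝 (1:ℝ)))
      exact this.mono_left nhdsWithin_le_nhds
    · filter_upwards [self_mem_nhdsWithin] with x hx
      simpa using sub_pos.2 (mem_Iio.1 hx)
  have h := log_mul_log_zero.comp hmap
  have : (fun x : ℝ => (Real.log (1-x)) * Real.log (1 - (1-x))) =
      fun x : ℝ => Real.log x * Real.log (1 - x) := by
    funext x; rw [show (1:ℝ) - (1 - x) = x by ring]; ring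
  rw [Function.comp_def] at h
  rw [this] at h
  exact h

lemma Li2_tendsto_one : Tendsto Li2 (𝓝[<] (1:ℝ)) (𝓝 (π ^ 2 / 6)) := by
  have h := (Li2_contOn 1 (right_mem_Icc.2 zero_le_one)).mono Ioo_subset_Icc_self
  have h2 : Tendsto Li2 (𝓝[Ioo (0:ℝ) 1] 1) (𝓝 (Li2 1)) := h
  rwa [nhdsWithin_Ioo_eq_nhdsLT zero_lt_one, Li2_one] at h2

lemma Li2_tendsto_zero : Tendsto Li2 (𝓝[>] (0:ℝ)) (𝓝 0) := by
  have h := (Li2_contOn 0 (left_mem_Icc.2 zero_le_one)).mono Ioo_subset_Icc_self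
  have h2 : Tendsto Li2 (𝓝[Ioo (0:ℝ) 1] 0) (𝓝 (Li2 0)) := h
  rwa [nhdsWithin_Ioo_eq_nhdsGT zero_lt_one, Li2_zero] at h2

lemma one_sub_tendsto : Tendsto (fun y : ℝ => 1 - y) (𝓝[>] (0:ℝ)) (𝓝[<] (1:ℝ)) := by
  rw [tendsto_nhdsWithin_iff]
  constructor
  · have : Tendsto (fun x : ℝ => 1 - x) (𝓝 (0:ℝ)) (𝓝 1) := by
      simpa using (tendsto_const_nhds (x := (1:ℝ)) (f := 𝓝 (0:ℝ))).sub (tendsto_id (x := 𝓝 (0:ℝ)))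
    exact this.mono_left nhdsWithin_le_nhds
  · filter_upwards [self_mem_nhdsWithin] with x hx
    simpa using mem_Ioi.1 hx

lemma euler_refl {x : ℝ} (hx : x ∈ Ioo (0:ℝ) 1) :
    Li2 x + Li2 (1 - x) + Real.log x * Real.log (1 - x) = π ^ 2 / 6 := by
  set E : ℝ → ℝ := fun y => Li2 y + Li2 (1 - y) + Real.log y * Real.log (1 - y) with hE
  have hd : ∀ y ∈ Ioo (0:ℝ) 1, HasDerivAt E 0 y := by
    intro y hy
    have hy0 : y ≠ 0 := ne_of_gt hy.1
    have hy1 : (1:ℝ) - y ≠ 0 := sub_ne_zero_of_ne (ne_of_lt hy.2).symm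
    have h1m : HasDerivAt (fun z : ℝ => 1 - z) (-1) y := by
      simpa using (hasDerivAt_id y).const_sub 1
    have hmem : (1 - y) ∈ Ioo (0:ℝ) 1 := by
      constructor
      · linarith [hy.2]
      · linarith [hy.1]
    have h2 : HasDerivAt (fun z : ℝ => Li2 (1 - z))
        (-(Real.log (1 - (1-y)) / (1-y)) * (-1)) y := (Li2_hasDeriv hmem).comp y h1m
    have hlog1 : HasDerivAt (fun z : ℝ => Real.log (1 - z)) ((1 - y)⁻¹ * (-1)) y :=
      (Real.hasDerivAt_log hy1).comp y h1m
    have h3 : HasDerivAt (fun z : ℝ => Real.log z * Real.log (1 - z))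
        (y⁻¹ * Real.log (1 - y) + Real.log y * ((1-y)⁻¹ * (-1))) y :=
      (Real.hasDerivAt_log hy0).mul hlog1
    have h := ((Li2_hasDeriv hy).add h2).add h3
    have heq : -(Real.log (1 - y) / y) + -(Real.log (1 - (1-y)) / (1-y)) * (-1) +
        (y⁻¹ * Real.log (1 - y) + Real.log y * ((1-y)⁻¹ * (-1))) = 0 := by
      rw [show (1:ℝ) - (1 - y) = y by ring]
      field_simp
      ring
    rwa [heq] at h
  have hcont : ContinuousOn E (Ioo (0:ℝ) 1) :=
    fun y hy => (hd y hy).continuousAt.continuousWithinAt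
  have hdiff : DifferentiableOn ℝ E (interior (Ioo (0:ℝ) 1)) := by
    rw [interior_Ioo]
    exact fun y hy => ((hd y hy).differentiableAt).differentiableWithinAt
  have hderiv0 : ∀ y ∈ interior (Ioo (0:ℝ) 1), deriv E y = 0 := by
    rw [interior_Ioo]
    exact fun y hy => (hd y hy).deriv
  have hmono : MonotoneOn E (Ioo (0:ℝ) 1) :=
    monotoneOn_of_deriv_nonneg (convex_Ioo 0 1) hcont hdiff
      (fun y hy => le_of_eq (hderiv0 y hy).symm)
  have hanti : AntitoneOn E (Ioo (0:ℝ) 1) :=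
    antitoneOn_of_deriv_nonpos (convex_Ioo 0 1) hcont hdiff
      (fun y hy => le_of_eq (hderiv0 y hy))
  have hconst : ∀ y ∈ Ioo (0:ℝ) 1, E y = E x := by
    intro y hy
    rcases le_total y x with h | h
    · exact le_antisymm (hmono hy hx h) (hanti hy hx h)
    · exact le_antisymm (hanti hx hy h) (hmono hx hy h)
  have htend : Tendsto E (𝓝[>] (0:ℝ)) (𝓝 (π ^ 2 / 6)) := by
    have h1 : Tendsto (fun y : ℝ => Li2 (1 - y)) (𝓝[>] (0:ℝ)) (𝓝 (π ^ 2 / 6)) :=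
      Li2_tendsto_one.comp one_sub_tendsto
    have := (Li2_tendsto_zero.add h1).add log_mul_log_zero
    simpa using this
  have heventually : ∀ᶠ y in (𝓝[>] (0:ℝ)), E y = E x := by
    filter_upwards [Ioo_mem_nhdsGT hx.1] with y hy
    exact hconst y ⟨hy.1, lt_trans hy.2 hx.2⟩
  have htend2 : Tendsto E (𝓝[>] (0:ℝ)) (𝓝 (E x)) :=
    tendsto_const_nhds.congr' (heventually.mono fun y hy => hy.symm)
  exact tendsto_nhds_unique htend2 htend

lemma euler_refl' {x : ℝ} (hx : x ∈ Ioo (0:ℝ) 1) :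
    Li2 x + Li2 (1 - x) + Real.log x * Real.log (1 - x) = π ^ 2 / 6 :=
  euler_refl hx

lemma rogersL_half : rogersL (1/2) = π ^ 2 / 12 := by
  have h := euler_refl (show (1/2 : ℝ) ∈ Ioo (0:ℝ) 1 by norm_num)
  rw [show (1:ℝ) - 1/2 = 1/2 by norm_num] at h
  unfold rogersL
  rw [show (1:ℝ) - 1/2 = 1/2 by norm_num]
  linarith

lemma P_nonpos {y : ℝ} (hy : y ∈ Ioo (0:ℝ) 1) :
    (1-y^2)^2 * Real.log (1-y) + 2*y*Real.log y
      - (1-y^2)*(1+y^2)*Real.log (1+y) + y^2*(1-y^2) ≤ 0 := by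
  obtain ⟨hy0, hy1⟩ := hy
  have h1 : Real.log (1-y) ≤ 0 := Real.log_nonpos (by linarith) (by linarith)
  have h2 : Real.log y ≤ 0 := Real.log_nonpos hy0.le hy1.le
  have hpy : (0:ℝ) < 1 + y := by linarith
  have l1 : y/(1+y) ≤ Real.log (1+y) := by
    have h := Real.one_sub_inv_le_log_of_pos hpy
    have : y/(1+y) = 1 - (1+y)⁻¹ := by field_simp; ring
    linarith [this ▸ h]
  have l3 : y^2 ≤ (1+y^2) * (y/(1+y)) := by
    rw [mul_div_assoc', le_div_iff₀ hpy]
    nlinarith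
  have l4 : y^2 ≤ (1+y^2) * Real.log (1+y) :=
    le_trans l3 (mul_le_mul_of_nonneg_left l1 (by positivity))
  have hsq : (0:ℝ) ≤ 1 - y^2 := by nlinarith
  have hc : y^2*(1-y^2) ≤ (1-y^2)*(1+y^2)*Real.log (1+y) := by
    have := mul_le_mul_of_nonneg_left l4 hsq
    nlinarith [this]
  have hA : (1-y^2)^2 * Real.log (1-y) ≤ 0 :=
    mul_nonpos_iff.2 (Or.inl ⟨sq_nonneg _, h1⟩)
  have hB : 2*y*Real.log y ≤ 0 :=
    mul_nonpos_iff.2 (Or.inl ⟨by linarith, h2⟩)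
  linarith

noncomputable def Gfun (x : ℝ) : ℝ :=
  π ^ 2 / 4 - rogersL x - rogersL (x/(1+x)) - (1-x^2)*(2-Real.log (1-x^2))/4

lemma G_hasDeriv {y : ℝ} (hy : y ∈ Ioo (0:ℝ) 1) :
    HasDerivAt Gfun
      (((1-y^2)^2 * Real.log (1-y) + 2*y*Real.log y
        - (1-y^2)*(1+y^2)*Real.log (1+y) + y^2*(1-y^2)) / (2*y*(1-y^2))) y := by
  obtain ⟨hy0, hy1⟩ := hy
  have hy0' : y ≠ 0 := ne_of_gt hy0
  have h1y : (0:ℝ) < 1 + y := by linarith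
  have h1y' : (1:ℝ) + y ≠ 0 := ne_of_gt h1y
  have hmy : (1:ℝ) - y ≠ 0 := by intro h; nlinarith [sub_eq_zero.1 h]
  have hsq : (0:ℝ) < 1 - y^2 := by nlinarith
  have hsq' : (1:ℝ) - y^2 ≠ 0 := ne_of_gt hsq
  -- derivative of rogersL at y
  have d1 := rogersL_hasDeriv ⟨hy0, hy1⟩
  -- derivative of y ↦ y/(1+y)
  have hq : HasDerivAt (fun z : ℝ => z/(1+z)) ((1*(1+y) - y*1)/(1+y)^2) y := by
    exact (hasDerivAt_id y).div (by simpa using (hasDerivAt_id y).const_add 1) h1y'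
  have hqmem : y/(1+y) ∈ Ioo (0:ℝ) 1 := by
    constructor
    · positivity
    · rw [div_lt_one h1y]; linarith
  have d2 := (rogersL_hasDeriv hqmem).comp y hq
  rw [Function.comp_def] at d2
  -- derivative of the comparison term
  have hpow : HasDerivAt (fun z : ℝ => 1 - z^2) (-(2*y)) y := by
    have := (hasDerivAt_pow 2 y).const_sub 1
    simpa using this
  have hlogsq : HasDerivAt (fun z : ℝ => Real.log (1-z^2)) ((1-y^2)⁻¹ * (-(2*y))) y :=
    by have := (Real.hasDerivAt_log hsq').comp y hpow; exact this
  have d3 : HasDerivAt (fun z : ℝ => (1-z^2)*(2-Real.log (1-z^2))/4)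
      (((-(2*y)) * (2-Real.log (1-y^2)) + (1-y^2) * (-((1-y^2)⁻¹ * (-(2*y)))))/4) y :=
    (hpow.mul ((hlogsq.const_sub 2))).div_const 4
  have h := (((hasDerivAt_const y (π^2/4)).sub d1).sub d2).sub d3
  unfold Gfun
  convert h using 1
  · rfl
  · rfl
  · rfl
  have e1 : (1:ℝ) - y/(1+y) = 1/(1+y) := by field_simp; ring
  have e2 : Real.log (y/(1+y)) = Real.log y - Real.log (1+y) := Real.log_div hy0' h1y'
  have e3 : Real.log (1 - y/(1+y)) = -Real.log (1+y) := by
    rw [e1, one_div, Real.log_inv]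
  have e4 : Real.log (1-y^2) = Real.log (1-y) + Real.log (1+y) := by
    rw [show (1:ℝ)-y^2 = (1-y)*(1+y) by ring, Real.log_mul hmy h1y']
  rw [e2, e3, e1, e4]
  field_simp
  ring

lemma rogersL_tendsto_one : Tendsto rogersL (𝓝[<] (1:ℝ)) (𝓝 (π ^ 2 / 6)) := by
  have h2 : Tendsto (fun x : ℝ => (1/2 : ℝ) * Real.log x * Real.log (1-x))
      (𝓝[<] (1:ℝ)) (𝓝 0) := by
    have := log_mul_log_one.const_mul (1/2 : ℝ)
    simp only [mul_zero] at this
    refine this.congr fun x => by ring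
  have h3 := Li2_tendsto_one.add h2
  rw [add_zero] at h3
  exact h3

lemma rogersL_contAt_half : ContinuousAt rogersL (1/2 : ℝ) := by
  have h1 : ContinuousAt Li2 (1/2 : ℝ) :=
    Li2_contOn.continuousAt (Icc_mem_nhds (by norm_num) (by norm_num))
  have h2 : ContinuousAt (fun x : ℝ => (1/2 : ℝ) * Real.log x * Real.log (1-x)) (1/2 : ℝ) := by
    have hl : ContinuousAt Real.log (1/2 : ℝ) := Real.continuousAt_log (by norm_num)
    have hl2 : ContinuousAt (fun x : ℝ => Real.log (1-x)) (1/2 : ℝ) := by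
      have : ContinuousAt (fun x : ℝ => 1 - x) (1/2 : ℝ) :=
        (continuous_const.sub continuous_id).continuousAt
      exact (Real.continuousAt_log (by norm_num)).comp this
    exact (hl.const_mul _).mul hl2
  exact h1.add h2

lemma G_tendsto : Tendsto Gfun (𝓝[<] (1:ℝ)) (𝓝 0) := by
  have hq : Tendsto (fun x : ℝ => x/(1+x)) (𝓝[<] (1:ℝ)) (𝓝 (1/2 : ℝ)) := by
    have hc : ContinuousAt (fun x : ℝ => x/(1+x)) 1 :=
      continuousAt_id.div ((continuous_const.add continuous_id).continuousAt) (by norm_num)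
    have := hc.tendsto
    rw [show (1:ℝ)/(1+1) = 1/2 by norm_num] at this
    exact this.mono_left nhdsWithin_le_nhds
  have h2 : Tendsto (fun x : ℝ => rogersL (x/(1+x))) (𝓝[<] (1:ℝ)) (𝓝 (π ^ 2 / 12)) := by
    have := rogersL_contAt_half.tendsto.comp hq
    rwa [rogersL_half] at this
  have h3 : Tendsto (fun x : ℝ => (1-x^2)*(2-Real.log (1-x^2))/4) (𝓝[<] (1:ℝ)) (𝓝 0) := by
    have hu : Tendsto (fun x : ℝ => 1-x^2) (𝓝[<] (1:ℝ)) (𝓝[>] (0:ℝ)) := by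
      rw [tendsto_nhdsWithin_iff]
      constructor
      · have hc : ContinuousAt (fun x : ℝ => 1-x^2) 1 :=
          (continuous_const.sub (continuous_pow 2)).continuousAt
        have := hc.tendsto
        norm_num at this
        exact this.mono_left nhdsWithin_le_nhds
      · filter_upwards [Ioo_mem_nhdsLT zero_lt_one] with x hx
        have : x^2 < 1 := by nlinarith [hx.1, hx.2]
        simpa using this
    have hv : Tendsto (fun u : ℝ => (2*u - Real.log u * u)/4) (𝓝[>] (0:ℝ)) (𝓝 0) := by
      have hid : Tendsto (fun u : ℝ => u) (𝓝[>] (0:ℝ)) (𝓝 0) :=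
        tendsto_id.mono_right nhdsWithin_le_nhds
      have hlm : Tendsto (fun u : ℝ => Real.log u * u) (𝓝[>] (0:ℝ)) (𝓝 0) := by
        have := tendsto_log_mul_rpow_nhdsGT_zero one_pos
        refine this.congr fun u => by rw [Real.rpow_one]
      have := ((hid.const_mul 2).sub hlm).div_const 4
      simpa using this
    have := hv.comp hu
    refine this.congr fun x => by rw [Function.comp_apply]; ring
  have htot := ((((tendsto_const_nhds (x := π^2/4) (f := 𝓝[<] (1:ℝ))).sub
    rogersL_tendsto_one).sub h2).sub h3)
  have : π^2/4 - π^2/6 - π^2/12 - 0 = 0 := by ring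
  rw [this] at htot
  exact htot

lemma G_nonneg {x : ℝ} (hx : x ∈ Ioo (0:ℝ) 1) : 0 ≤ Gfun x := by
  have hanti : AntitoneOn Gfun (Ioo (0:ℝ) 1) := by
    apply antitoneOn_of_deriv_nonpos (convex_Ioo 0 1)
    · exact fun y hy => (G_hasDeriv hy).continuousAt.continuousWithinAt
    · rw [interior_Ioo]
      exact fun y hy => (G_hasDeriv hy).differentiableAt.differentiableWithinAt
    · rw [interior_Ioo]
      intro y hy
      rw [(G_hasDeriv hy).deriv]
      apply div_nonpos_of_nonpos_of_nonneg (P_nonpos hy)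
      have h2 : (0:ℝ) < 1 - y^2 := by nlinarith [hy.1, hy.2]
      nlinarith [hy.1]
  refine le_of_tendsto G_tendsto ?_
  filter_upwards [Ioo_mem_nhdsLT hx.2] with y hy
  exact hanti hx ⟨lt_trans hx.1 hy.1, hy.2⟩ hy.1.le

lemma key_ineq {x : ℝ} (hx : x ∈ Ioo (0:ℝ) 1) :
    (1-x^2)*(2-Real.log (1-x^2))/4 ≤ π ^ 2 / 4 - rogersL x - rogersL (x/(1+x)) := by
  have := G_nonneg hx
  unfold Gfun at this
  linarith

lemma Phi_lower {l : ℝ} (hl : 0 < l) :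
    (l + 2)/4 * Real.exp (-l) ≤
      π ^ 2 / 4 - rogersL (Real.sqrt (1 - Real.exp (-l))) -
        rogersL (Real.sqrt (1 - Real.exp (-l)) / (1 + Real.sqrt (1 - Real.exp (-l)))) := by
  set x := Real.sqrt (1 - Real.exp (-l)) with hxdef
  have he1 : Real.exp (-l) < 1 := by
    rw [← Real.exp_zero]
    exact Real.exp_lt_exp.2 (by linarith)
  have h0 : 0 < 1 - Real.exp (-l) := by linarith
  have hx2 : x^2 = 1 - Real.exp (-l) := Real.sq_sqrt h0.le
  have hx : x ∈ Ioo (0:ℝ) 1 := by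
    constructor
    · exact Real.sqrt_pos.2 h0
    · nlinarith [Real.sqrt_nonneg (1 - Real.exp (-l)), hx2, Real.exp_pos (-l)]
  have hk := key_ineq hx
  rw [hx2, show (1:ℝ) - (1 - Real.exp (-l)) = Real.exp (-l) by ring, Real.log_exp] at hk
  have : Real.exp (-l) * (2 - (-l))/4 = (l+2)/4 * Real.exp (-l) := by ring
  linarith

lemma c_antitone {l L : ℝ} (h0 : 0 < l) (h : l ≤ L) :
    (L+2)/4 * Real.exp (-L) ≤ (l+2)/4 * Real.exp (-l) := by
  have hexp : (L - l) + 1 ≤ Real.exp (L - l) := Real.add_one_le_exp _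
  have hrel : Real.exp (-l) = Real.exp (L-l) * Real.exp (-L) := by
    rw [← Real.exp_add]; ring_nf
  rw [hrel]
  have hE := Real.exp_pos (-L)
  have h1 : (l+2)*((L-l)+1) ≤ (l+2)*Real.exp (L-l) :=
    mul_le_mul_of_nonneg_left hexp (by linarith)
  have h2 : L+2 ≤ (l+2)*((L-l)+1) := by nlinarith
  nlinarith [mul_le_mul_of_nonneg_right (h2.trans h1) hE.le]


end OrthoAux

/-- Counting corollary for surfaces of genus `g` with `n > 0` cusps: if the
graded identity `∑ Φ(ℓ_j) = (π²/4)(2g+n−2)` holds, then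
`#{j : ℓ_j ≤ L} ≤ π²(2g+n−2)·e^L/(L+2)` for every `L > 0`. -/
theorem orthogeodesic_counting (g n : ℕ) (hn : 1 ≤ n)
    (hχ : 0 < 2 * (g : ℝ) + n - 2) (ℓ : ℕ → ℝ) (hℓ : ∀ j, 0 < ℓ j)
    (hsum :
      HasSum
        (fun j =>
          π ^ 2 / 4 - rogersL (Real.sqrt (1 - Real.exp (-ℓ j))) -
            rogersL (Real.sqrt (1 - Real.exp (-ℓ j)) /
              (1 + Real.sqrt (1 - Real.exp (-ℓ j)))))
        (π ^ 2 / 4 * (2 * (g : ℝ) + n - 2)))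
    (L : ℝ) (hL : 0 < L) :
    {j : ℕ | ℓ j ≤ L}.Finite ∧
      (Nat.card {j : ℕ | ℓ j ≤ L} : ℝ) ≤
        π ^ 2 * (2 * (g : ℝ) + n - 2) * Real.exp L / (L + 2) := by
  set f : ℕ → ℝ := fun j =>
    π ^ 2 / 4 - rogersL (Real.sqrt (1 - Real.exp (-ℓ j))) -
      rogersL (Real.sqrt (1 - Real.exp (-ℓ j)) /
        (1 + Real.sqrt (1 - Real.exp (-ℓ j)))) with hfdef
  set T : ℝ := π ^ 2 / 4 * (2 * (g : ℝ) + n - 2) with hTdef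
  set c : ℝ := (L+2)/4 * Real.exp (-L) with hcdef
  have hc : 0 < c := by positivity
  have h1 : ∀ j, (ℓ j + 2)/4 * Real.exp (-ℓ j) ≤ f j := fun j => Phi_lower (hℓ j)
  have hpos : ∀ j, 0 ≤ f j := by
    intro j
    refine le_trans ?_ (h1 j)
    have := hℓ j
    exact mul_nonneg (by linarith) (Real.exp_nonneg _)
  have hS : ∀ j, ℓ j ≤ L → c ≤ f j := fun j hj =>
    (c_antitone (hℓ j) hj).trans (h1 j)
  have hfin : {j : ℕ | ℓ j ≤ L}.Finite := by
    by_contra hinf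
    obtain ⟨m, hm⟩ := exists_nat_gt (T / c)
    obtain ⟨t, hts, htc⟩ := Set.Infinite.exists_subset_card_eq hinf m
    have hsum_t : ∑ j ∈ t, f j ≤ T := sum_le_hasSum t (fun j _ => hpos j) hsum
    have hlow : (m:ℝ) * c ≤ ∑ j ∈ t, f j := by
      rw [← htc]
      calc (t.card : ℝ) * c = ∑ _j ∈ t, c := by rw [Finset.sum_const, nsmul_eq_mul]
      _ ≤ ∑ j ∈ t, f j := Finset.sum_le_sum fun j hj => hS j (hts hj)
    have : (m:ℝ) ≤ T / c := by rw [le_div_iff₀ hc]; linarith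
    linarith [hm]
  refine ⟨hfin, ?_⟩
  have hcard : (Nat.card {j : ℕ | ℓ j ≤ L} : ℝ) * c ≤ T := by
    have hcc : (Nat.card {j : ℕ | ℓ j ≤ L}) = hfin.toFinset.card := by
      rw [Nat.card_coe_set_eq, Set.ncard_eq_toFinset_card _ hfin]
    rw [hcc]
    have hsum_t : ∑ j ∈ hfin.toFinset, f j ≤ T :=
      sum_le_hasSum _ (fun j _ => hpos j) hsum
    calc (hfin.toFinset.card : ℝ) * c = ∑ _j ∈ hfin.toFinset, c := by
          rw [Finset.sum_const, nsmul_eq_mul]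
      _ ≤ ∑ j ∈ hfin.toFinset, f j :=
          Finset.sum_le_sum fun j hj => hS j (hfin.mem_toFinset.1 hj)
      _ ≤ T := hsum_t
  have hTc : T / c = π ^ 2 * (2 * (g : ℝ) + n - 2) * Real.exp L / (L + 2) := by
    rw [hTdef, hcdef, Real.exp_neg]
    have hE := Real.exp_pos L
    field_simp
  rw [← hTc, le_div_iff₀ hc]
  linarith
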